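/- Let 𝔽 = (G, M, I, R_□, R_◇) be an enriched formal context with concept lattice 𝔓⁺. (1) If I ⊆ R_□, then c ≤ [R_□]c for every formal concept c, where [R_□]c = (R_□^{(0)}[⦃c⦄], (R_□^{(0)}[⦃c⦄])^↑). (2) If g I m implies m R_◇ g for all g ∈ G and m ∈ M (i.e., I ⊆ R_◇⁻¹), then ⟨R_◇⟩c ≤ c for every formal concept c, where ⟨R_◇⟩c = ((R_◇^{(0)}[⟦c⟧])^↓, R_◇^{(0)}[⟦c⟧]). -/

import Mathlib

/-- Let `(G, M, I, R_□, R_◇)` be an enriched formal context.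
(1) If `I ⊆ R_□` then `c ≤ [R_□]c` for every formal concept `c`.
(2) If `g I m` implies `m R_◇ g` then `⟨R_◇⟩c ≤ c` for every formal concept `c`. -/
theorem inflationary_box_and_deflationary_diamond {G M : Type*} (I : G → M → Prop)
    (Rbox : G → M → Prop) (Rdia : M → G → Prop)
    (hcompBox0 : ∀ m : M,
      lowerPolar I (upperPolar I (lowerPolar Rbox {m})) = lowerPolar Rbox {m})
    (hcompBox1 : ∀ g : G,
      upperPolar I (lowerPolar I (upperPolar Rbox {g})) = upperPolar Rbox {g})
    (hcompDia0 : ∀ g : G,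
      upperPolar I (lowerPolar I (lowerPolar Rdia {g})) = lowerPolar Rdia {g})
    (hcompDia1 : ∀ m : M,
      lowerPolar I (upperPolar I (upperPolar Rdia {m})) = upperPolar Rdia {m}) :
    ((∀ g m, I g m → Rbox g m) → ∀ c d : Concept G M I,
        d.extent = lowerPolar Rbox c.intent → d.intent = upperPolar I d.extent → c ≤ d) ∧
    ((∀ g m, I g m → Rdia m g) → ∀ c d : Concept G M I,
        d.intent = lowerPolar Rdia c.extent → d.extent = lowerPolar I d.intent → d ≤ c) := by
  constructor
  · intro hIR c d hd1 _
    rw [← Concept.extent_subset_extent_iff, hd1, ← c.lowerPolar_intent]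
    intro g hg m hm
    exact hIR g m (hg hm)
  · intro hIR c d hd2 hd1
    rw [← Concept.extent_subset_extent_iff, ← c.lowerPolar_intent, hd1, hd2]
    intro g hg m hm
    exact hg fun g' hg' => hIR g' m ((c.lowerPolar_intent ▸ hg') hm)
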